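/- Prophecize with delay n ≥ 1 preserves invariance: let S = (I,T) over A, P : A → Prop, t : A → B, n ≥ 1. Augment S with n chained history variables for t (h₁' = t(a), h_i' = h_{i-1}) and a frozen prophecy variable p (p' = p, both histories and p unconstrained initially), and replace the property by P'(a,h,p) := (p = h_n → P a). Then S satisfies invariant P if and only if the augmented system satisfies invariant P'. -/

import Mathlib

inductive Reachable {A : Type*} (I : A → Prop) (T : A → A → Prop) : A → Prop
  | init : ∀ a, I a → Reachable I T a
  | step : ∀ a b, Reachable I T a → T a b → Reachable I T b

theorem prophecize_with_delay_sound {A B : Type*}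
    (I : A → Prop) (T : A → A → Prop) (P : A → Prop) (t : A → B)
    (n : ℕ) (hn : 1 ≤ n) :
    (∀ a, Reachable I T a → P a) ↔
      (∀ s : A × (Fin n → B) × B,
        Reachable (fun s : A × (Fin n → B) × B => I s.1)
          (fun s s' : A × (Fin n → B) × B =>
            T s.1 s'.1 ∧
            s'.2.1 ⟨0, by omega⟩ = t s.1 ∧
            (∀ i : Fin n, 1 ≤ (i : ℕ) →
              s'.2.1 i = s.2.1 ⟨(i : ℕ) - 1, by omega⟩) ∧
            s'.2.2 = s.2.2) s →
        (s.2.2 = s.2.1 ⟨n - 1, by omega⟩ → P s.1)) := by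
  constructor
  · intro hP s hs hpe
    clear hpe
    apply hP

    induction hs with
    | init a ha => exact Reachable.init _ ha
    | step a b _ hT ih => exact Reachable.step _ _ ih hT.1
  · intro hP a ha
    have key : ∃ h : Fin n → B, ∀ p : B,
        Reachable (fun s : A × (Fin n → B) × B => I s.1)
          (fun s s' : A × (Fin n → B) × B =>
            T s.1 s'.1 ∧
            s'.2.1 ⟨0, by omega⟩ = t s.1 ∧
            (∀ i : Fin n, 1 ≤ (i : ℕ) →
              s'.2.1 i = s.2.1 ⟨(i : ℕ) - 1, by omega⟩) ∧
            s'.2.2 = s.2.2) (a, h, p) := by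
      induction ha with
      | init a ha => exact ⟨fun _ => t a, fun p => Reachable.init _ ha⟩
      | step a b _ hT ih =>
        obtain ⟨h, hh⟩ := ih
        refine ⟨fun i => if hi : (i : ℕ) = 0 then t a else h ⟨(i : ℕ) - 1, by omega⟩,
          fun p => Reachable.step (a, h, p) _ (hh p) ?_⟩
        refine ⟨hT, by simp, fun i hi => by simp [Nat.pos_iff_ne_zero.mp hi], rfl⟩
    obtain ⟨h, hh⟩ := key
    exact hP (a, h, h ⟨n - 1, by omega⟩) (hh _) rfl
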